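/- Let ρ > 0, γ > 0 with γ ≠ 1, ω ≠ 0, ν₃ > 0, and let α, ψ, η, μ_C, μ_G, σ_C, σ_G, σ_T, φ_C, φ_G, A_C, A_G, i_C, i_G be real numbers with A_C − i_C > 0 and A_G − i_G > 0. Define the constant c := α·log(A_C − i_C) + ψ·log(A_G − i_G) + (ψ/ω)·log(ν₃) + (α/ρ)(μ_C + i_C − (φ_C/2)i_C² − σ_C²/2) + (ψ/ρ)(μ_G + i_G − (φ_G/2)i_G² − σ_G²/2) + ((1−γ)/(2ρ))(α²σ_C² + ψ²σ_G² + η²σ_T²), and define W : ℝ³ → ℝ by W(x, y, T) = exp((1−γ)(−ηT + αx + ψy + c))/(1−γ). Then W satisfies the post-transition Hamilton–Jacobi–Bellman equation for the taxation shock at every (x, y, T): 0 = ρ(1−γ)W·[α(log(A_C − i_C) + x) + ψ((1/ω)log(ν₃) + log(A_G − i_G) + y) − ηT − (1/(1−γ))·log((1−γ)W)] + (μ_C + i_C − (φ_C/2)i_C² − σ_C²/2)·∂W/∂x + (μ_G + i_G − (φ_G/2)i_G² − σ_G²/2)·∂W/∂y + (σ_C²/2)·∂²W/∂x² + (σ_G²/2)·∂²W/∂y²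 + (σ_T²/2)·∂²W/∂T². -/

import Mathlib

open Real

private lemma expHasDeriv (a b d : ℝ) (t : ℝ) :
    HasDerivAt (fun t : ℝ => Real.exp (a * t + b) / d)
      (a * Real.exp (a * t + b) / d) t := by
  have h1 : HasDerivAt (fun t : ℝ => a * t + b) a t := by
    simpa using ((hasDerivAt_id t).const_mul a).add_const b
  simpa [mul_comm, mul_div_assoc] using (h1.exp.div_const d)

private lemma expDeriv (a b d : ℝ) :
    deriv (fun t : ℝ => Real.exp (a * t + b) / d) =
      fun t => a * Real.exp (a * t + b) / d := by
  funext t; exact (expHasDeriv a b d t).deriv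

private lemma expDeriv2 (a b d : ℝ) (t : ℝ) :
    iteratedDeriv 2 (fun t : ℝ => Real.exp (a * t + b) / d) t =
      a ^ 2 * Real.exp (a * t + b) / d := by
  rw [show (2 : ℕ) = 1 + 1 from rfl, iteratedDeriv_succ, iteratedDeriv_one, expDeriv]
  have h : (fun t : ℝ => a * Real.exp (a * t + b) / d)
      = fun t : ℝ => Real.exp (a * t + b) / (d / a) := by
    funext s; rw [div_div_eq_mul_div]; ring
  rcases eq_or_ne a 0 with ha | ha
  · subst ha
    simp
  · rw [h, expDeriv]
    field_simp

set_option maxHeartbeats 2000000 in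
theorem stmt_12 (ρ γ ω ν₃ α ψ η μC μG σC σG σT φC φG AC AG iC iG c : ℝ)
    (hρ : 0 < ρ) (hγ : 0 < γ) (hγ1 : γ ≠ 1) (hω : ω ≠ 0) (hν₃ : 0 < ν₃)
    (hAC : 0 < AC - iC) (hAG : 0 < AG - iG)
    (hc : c = α * Real.log (AC - iC) + ψ * Real.log (AG - iG)
      + (ψ / ω) * Real.log ν₃
      + (α / ρ) * (μC + iC - (φC / 2) * iC ^ 2 - σC ^ 2 / 2)
      + (ψ / ρ) * (μG + iG - (φG / 2) * iG ^ 2 - σG ^ 2 / 2)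
      + ((1 - γ) / (2 * ρ)) * (α ^ 2 * σC ^ 2 + ψ ^ 2 * σG ^ 2 + η ^ 2 * σT ^ 2))
    (W : ℝ → ℝ → ℝ → ℝ)
    (hW : ∀ x y T, W x y T =
      Real.exp ((1 - γ) * (-η * T + α * x + ψ * y + c)) / (1 - γ)) :
    ∀ x y T,
      0 = ρ * (1 - γ) * W x y T *
            (α * (Real.log (AC - iC) + x)
              + ψ * ((1 / ω) * Real.log ν₃ + Real.log (AG - iG) + y)
              - η * T - (1 / (1 - γ)) * Real.log ((1 - γ) * W x y T))
        + (μC + iC - (φC / 2) * iC ^ 2 - σC ^ 2 / 2) * deriv (fun x' => W x' y T) x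
        + (μG + iG - (φG / 2) * iG ^ 2 - σG ^ 2 / 2) * deriv (fun y' => W x y' T) y
        + (σC ^ 2 / 2) * iteratedDeriv 2 (fun x' => W x' y T) x
        + (σG ^ 2 / 2) * iteratedDeriv 2 (fun y' => W x y' T) y
        + (σT ^ 2 / 2) * iteratedDeriv 2 (fun T' => W x y T') T := by
  intro x y T
  have hγ0 : (1 : ℝ) - γ ≠ 0 := sub_ne_zero.mpr (Ne.symm hγ1)
  have hρ0 : ρ ≠ 0 := ne_of_gt hρ
  have hfx : (fun x' => W x' y T)
      = fun x' => Real.exp (((1 - γ) * α) * x' + (1 - γ) * (-η * T + ψ * y + c)) / (1 - γ) := by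
    funext x'; rw [hW]; ring_nf
  have hfy : (fun y' => W x y' T)
      = fun y' => Real.exp (((1 - γ) * ψ) * y' + (1 - γ) * (-η * T + α * x + c)) / (1 - γ) := by
    funext y'; rw [hW]; ring_nf
  have hfT : (fun T' => W x y T')
      = fun T' => Real.exp (((1 - γ) * (-η)) * T' + (1 - γ) * (α * x + ψ * y + c)) / (1 - γ) := by
    funext T'; rw [hW]; ring_nf
  rw [hfx, hfy, hfT, expDeriv, expDeriv, expDeriv2, expDeriv2, expDeriv2, hW]
  beta_reduce
  have hE : (1 - γ) * (Real.exp ((1 - γ) * (-η * T + α * x + ψ * y + c)) / (1 - γ))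
      = Real.exp ((1 - γ) * (-η * T + α * x + ψ * y + c)) :=
    mul_div_cancel₀ _ hγ0
  rw [hE, Real.log_exp]
  have e1 : Real.exp ((1 - γ) * α * x + (1 - γ) * (-η * T + ψ * y + c))
      = Real.exp ((1 - γ) * (-η * T + α * x + ψ * y + c)) := by ring_nf
  have e2 : Real.exp ((1 - γ) * ψ * y + (1 - γ) * (-η * T + α * x + c))
      = Real.exp ((1 - γ) * (-η * T + α * x + ψ * y + c)) := by ring_nf
  have e3 : Real.exp ((1 - γ) * (-η) * T + (1 - γ) * (α * x + ψ * y + c))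
      = Real.exp ((1 - γ) * (-η * T + α * x + ψ * y + c)) := by ring_nf
  set E := Real.exp ((1 - γ) * (-η * T + α * x + ψ * y + c)) with hEdef
  rw [e1, e2, e3]
  clear_value E
  subst hc
  field_simp
  ring
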